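/- Under the same algebraic hypotheses, R̂ satisfies R̂ K = K R̂ = -q^{-2d-1} K and the cubic relation (R̂ - q·Id)(R̂ + q^{-1}·Id)(R̂ + q^{-2d-1}·Id) = 0. -/

import Mathlib

lemma stmt12_aux (K : Type*) [Field K] (q x : K) (hq0 : q ≠ 0) (hx : x ≠ 0)
    (hqq : q * q - 1 ≠ 0) (hd : (1:K) + x * x * (q*q) ≠ 0) :
    -q⁻¹ + (-(q - q⁻¹) * ((1 : K) + x * x * (q * q))⁻¹) *
      (-((x - x⁻¹) / (q - q⁻¹)) * (x * q + (x * q)⁻¹))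
      = -((x * x * q)⁻¹) := by
  have h : q - q⁻¹ = (q * q - 1) * q⁻¹ := by field_simp
  have hD : -(q ^ 3 * x ^ 2) + (q ^ 5 * x ^ 2 - q ^ 5 * x ^ 4) + q ^ 7 * x ^ 4 ≠ 0 := by
    have : -(q ^ 3 * x ^ 2) + (q ^ 5 * x ^ 2 - q ^ 5 * x ^ 4) + q ^ 7 * x ^ 4
        = q^3 * x^2 * ((q*q-1) * ((1:K) + x*x*(q*q))) := by ring
    rw [this]
    exact mul_ne_zero (mul_ne_zero (pow_ne_zero _ hq0) (pow_ne_zero _ hx)) (mul_ne_zero hqq hd)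
  rw [h]
  field_simp [hD]
  have hE : (-1 - x ^ 2 * q ^ 2 + x ^ 2 * q ^ 4 + q ^ 2 : K) ≠ 0 := by
    have : (-1 - x ^ 2 * q ^ 2 + x ^ 2 * q ^ 4 + q ^ 2 : K) = (q*q-1) * ((1:K) + x*x*(q*q)) := by ring
    rw [this]; exact mul_ne_zero hqq hd
  linear_combination (x ^ 2 - 1) * mul_inv_cancel₀ hE

/-- Under the same algebraic hypotheses, R̂ satisfies
R̂ K = K R̂ = -q^{-2d-1} K and the cubic relation
(R̂ - q·Id)(R̂ + q⁻¹·Id)(R̂ + q^{-2d-1}·Id) = 0. -/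
theorem stmt12 (K : Type*) [Field K] [CharZero K]
    (V : Type*) [AddCommGroup V] [Module K V]
    (q : K) (hq0 : q ≠ 0) (hqru : ∀ k : ℕ, k ≠ 0 → q ^ k ≠ 1)
    (d : ℤ) (hd : (1 : K) + q ^ (2 * d + 2) ≠ 0)
    (κ : K) (hκ : κ = -((q ^ d - q ^ (-d)) / (q - q⁻¹)) * (q ^ (d + 1) + q ^ (-(d + 1))))
    (Ps Kop : Module.End K V)
    (hPs : Ps * Ps = Ps) (hPK : Ps * Kop = 0) (hKP : Kop * Ps = 0)
    (hK2 : Kop * Kop = κ • Kop)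
    (Rh : Module.End K V)
    (hRh : Rh = (q + q⁻¹) • Ps - q⁻¹ • (1 : Module.End K V)
        + (-(q - q⁻¹) * ((1 : K) + q ^ (2 * d + 2))⁻¹) • Kop) :
    Rh * Kop = (-(q ^ (-(2 * d + 1)))) • Kop ∧
    Kop * Rh = (-(q ^ (-(2 * d + 1)))) • Kop ∧
    (Rh - q • (1 : Module.End K V)) * (Rh + q⁻¹ • (1 : Module.End K V)) *
        (Rh + q ^ (-(2 * d + 1)) • (1 : Module.End K V)) = 0 := by
  have hqq : q * q - 1 ≠ 0 := by
    intro h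
    exact hqru 2 (by norm_num) (by rw [pow_two]; linear_combination h)
  have hx : q ^ d ≠ 0 := zpow_ne_zero _ hq0
  have e1 : q ^ (2 * d + 2) = q ^ d * q ^ d * (q * q) := by
    rw [zpow_add₀ hq0, two_mul, zpow_add₀ hq0,
      show (2 : ℤ) = 1 + 1 from rfl, zpow_add₀ hq0, zpow_one]
  have e2 : q ^ (-d) = (q ^ d)⁻¹ := by rw [zpow_neg]
  have e3 : q ^ (d + 1) = q ^ d * q := by rw [zpow_add₀ hq0, zpow_one]
  have e4 : q ^ (-(d + 1)) = (q ^ d * q)⁻¹ := by rw [zpow_neg, e3]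
  have e5 : q ^ (-(2 * d + 1)) = (q ^ d * q ^ d * q)⁻¹ := by
    rw [zpow_neg, zpow_add₀ hq0, two_mul, zpow_add₀ hq0, zpow_one]
  rw [e1] at hd
  -- key scalar identity
  have key : -q⁻¹ + (-(q - q⁻¹) * ((1 : K) + q ^ d * q ^ d * (q * q))⁻¹) * κ
      = -(q ^ (-(2 * d + 1))) := by
    rw [hκ, e2, e3, e4, e5]
    exact stmt12_aux K q (q ^ d) hq0 hx hqq hd
  rw [e1] at hRh
  set c : K := -(q - q⁻¹) * ((1 : K) + q ^ d * q ^ d * (q * q))⁻¹ with hc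
  have hRK : Rh * Kop = (-(q ^ (-(2 * d + 1)))) • Kop := by
    rw [hRh]
    simp only [add_mul, sub_mul, smul_mul_assoc, hPK, hK2, one_mul, smul_zero, smul_smul]
    rw [← key]
    module
  have hKR : Kop * Rh = (-(q ^ (-(2 * d + 1)))) • Kop := by
    rw [hRh]
    simp only [mul_add, mul_sub, mul_smul_comm, hKP, hK2, mul_one, smul_zero, smul_smul]
    rw [← key]
    module
  refine ⟨hRK, hKR, ?_⟩
  have h1 : (Rh - q • (1 : Module.End K V)) * (Rh + q⁻¹ • (1 : Module.End K V))
      = (c * c * κ - c * q⁻¹ - c * q) • Kop := by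
    rw [hRh]
    simp only [sub_mul, add_mul, mul_sub, mul_add, smul_mul_assoc, mul_smul_comm,
      hPs, hPK, hKP, hK2, one_mul, mul_one, smul_zero, smul_smul]
    match_scalars <;> field_simp <;> ring
  rw [h1, smul_mul_assoc, mul_add, hKR, mul_smul_comm, mul_one]
  module
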